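/- Products of attractors: if |λ₁| = |λ₂| = 1 and X₁, X₂ are d×d complex matrices with Φ(X₁) = λ₁·X₁ and Φ(X₂) = λ₂·X₂, then the matrix product X₁·X₂ satisfies Φ(X₁·X₂) = (λ₁·λ₂)·(X₁·X₂); in particular X₁·X₂ is either zero or an eigenvector of Φ for the eigenvalue λ₁λ₂. -/

import Mathlib

open Matrix BigOperators

lemma trace_cTms_eq {d : ℕ} (B : Matrix (Fin d) (Fin d) ℂ) :
    Matrix.trace (Bᴴ * B) = ((∑ j, ∑ i, Complex.normSq (B i j) : ℝ) : ℂ) := by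
  simp only [Matrix.trace, Matrix.diag, Matrix.mul_apply, Matrix.conjTranspose_apply]
  push_cast
  congr 1; ext j; congr 1; ext i
  rw [Complex.normSq_eq_conj_mul_self]; rfl

lemma key {d m : ℕ}
    (U : Fin m → Matrix (Fin d) (Fin d) ℂ)
    (hU : ∀ i, U i ∈ Matrix.unitaryGroup (Fin d) ℂ)
    (p : Fin m → ℝ) (hp : ∀ i, 0 < p i) (hpsum : ∑ i, p i = 1)
    (lam : ℂ) (hlam : ‖lam‖ = 1)
    (X : Matrix (Fin d) (Fin d) ℂ)
    (h : ∑ i, (p i : ℂ) • (U i * X * (U i)ᴴ) = lam • X) :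
    ∀ i, U i * X * (U i)ᴴ = lam • X := by
  set A : Fin m → Matrix (Fin d) (Fin d) ℂ := fun i => U i * X * (U i)ᴴ with hA
  set B : Fin m → Matrix (Fin d) (Fin d) ℂ := fun i => A i - lam • X with hB
  have hUU : ∀ i, (U i)ᴴ * U i = 1 := fun i => by
    simpa [Matrix.star_eq_conjTranspose] using (Matrix.mem_unitaryGroup_iff'.mp (hU i))
  have hlam2 : (starRingEnd ℂ) lam * lam = 1 := by
    rw [mul_comm, Complex.mul_conj]
    norm_cast
    rw [Complex.normSq_eq_norm_sq, hlam]; norm_num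
  set T : ℂ := Matrix.trace (Xᴴ * X) with hT
  have htrA : ∀ i, Matrix.trace ((A i)ᴴ * A i) = T := by
    intro i
    have e : (A i)ᴴ * A i = U i * (Xᴴ * (X * (U i)ᴴ)) := by
      simp only [hA, Matrix.conjTranspose_mul, Matrix.conjTranspose_conjTranspose,
        Matrix.mul_assoc]
      rw [← Matrix.mul_assoc ((U i)ᴴ) (U i), hUU i, Matrix.one_mul]
    rw [e, Matrix.trace_mul_comm, Matrix.mul_assoc, Matrix.mul_assoc, hUU i,
      Matrix.mul_one, hT]
  have hsum : ∑ i, (p i : ℂ) * Matrix.trace ((B i)ᴴ * B i) = 0 := by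
    have expand : ∀ i, Matrix.trace ((B i)ᴴ * B i)
        = T - (starRingEnd ℂ) lam * Matrix.trace (Xᴴ * A i)
          - lam * Matrix.trace ((A i)ᴴ * X) + T := by
      intro i
      simp only [hB, Matrix.conjTranspose_sub, Matrix.sub_mul, Matrix.mul_sub,
        Matrix.trace_sub, Matrix.conjTranspose_smul, Matrix.smul_mul, Matrix.mul_smul,
        Matrix.trace_smul, RingHom.id_apply, smul_eq_mul, Complex.star_def]
      rw [htrA i, ← hT]
      linear_combination T * hlam2
    calc ∑ i, (p i : ℂ) * Matrix.trace ((B i)ᴴ * B i)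
        = (∑ i, (p i : ℂ)) * (2 * T)
          - (starRingEnd ℂ) lam * Matrix.trace (Xᴴ * ∑ i, (p i : ℂ) • A i)
          - lam * Matrix.trace ((∑ i, (p i : ℂ) • A i)ᴴ * X) := by
          rw [Finset.sum_mul, Matrix.mul_sum, Matrix.trace_sum, Finset.mul_sum,
            Matrix.conjTranspose_sum, Matrix.sum_mul, Matrix.trace_sum, Finset.mul_sum,
            ← Finset.sum_sub_distrib, ← Finset.sum_sub_distrib]
          congr 1; ext i
          rw [expand i]
          simp only [Matrix.mul_smul, Matrix.trace_smul, smul_eq_mul,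
            Matrix.conjTranspose_smul, Matrix.smul_mul, RingHom.id_apply,
            Complex.star_def, Complex.conj_ofReal]
          ring
      _ = 0 := by
          rw [h]
          have hps : (∑ i, (p i : ℂ)) = 1 := by
            rw [← Complex.ofReal_sum, hpsum, Complex.ofReal_one]
          rw [hps]
          simp only [Matrix.mul_smul, Matrix.trace_smul, smul_eq_mul,
            Matrix.conjTranspose_smul, Matrix.smul_mul, RingHom.id_apply,
            Complex.star_def, ← hT]
          linear_combination (-2 * T) * hlam2
  -- from hsum: each B i = 0
  set r : Fin m → ℝ := fun i => ∑ j, ∑ k, Complex.normSq (B i k j) with hr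
  have hrnn : ∀ i, 0 ≤ r i := fun i =>
    Finset.sum_nonneg fun j _ => Finset.sum_nonneg fun k _ => Complex.normSq_nonneg _
  have e2 : ∀ i, ((r i : ℝ) : ℂ) = Matrix.trace ((B i)ᴴ * B i) := fun i =>
    (trace_cTms_eq (B i)).symm
  have hsum' : ∑ i, p i * r i = 0 := by
    have h2 : ∑ i, (p i : ℂ) * ((r i : ℝ) : ℂ) = 0 := by simp_rw [e2]; exact hsum
    exact_mod_cast h2
  have hri : ∀ i, r i = 0 := by
    intro i
    have h0 : ∀ j ∈ Finset.univ, 0 ≤ p j * r j := fun j _ =>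
      mul_nonneg (hp j).le (hrnn j)
    have := (Finset.sum_eq_zero_iff_of_nonneg h0).mp hsum' i (Finset.mem_univ i)
    exact (mul_eq_zero.mp this).resolve_left (ne_of_gt (hp i))
  intro i
  have hBi : B i = 0 := by
    ext k j
    have := (Finset.sum_eq_zero_iff_of_nonneg
      (fun j' _ => Finset.sum_nonneg fun k' _ => Complex.normSq_nonneg (B i k' j'))).mp
      (hri i) j (Finset.mem_univ j)
    have := (Finset.sum_eq_zero_iff_of_nonneg
      (fun k' _ => Complex.normSq_nonneg (B i k' j))).mp this k (Finset.mem_univ k)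
    simpa using Complex.normSq_eq_zero.mp this
  have := sub_eq_zero.mp hBi
  simpa [hB, hA] using this

theorem stmt_9 {d m : ℕ} (hd : 1 ≤ d)
    (U : Fin m → Matrix (Fin d) (Fin d) ℂ)
    (hU : ∀ i, U i ∈ Matrix.unitaryGroup (Fin d) ℂ)
    (p : Fin m → ℝ) (hp : ∀ i, 0 < p i) (hpsum : ∑ i, p i = 1)
    (Φ : Matrix (Fin d) (Fin d) ℂ → Matrix (Fin d) (Fin d) ℂ)
    (hΦ : ∀ ρ, Φ ρ = ∑ i, (p i : ℂ) • (U i * ρ * (U i)ᴴ))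
    (lam₁ lam₂ : ℂ) (hlam₁ : ‖lam₁‖ = 1) (hlam₂ : ‖lam₂‖ = 1)
    (X₁ X₂ : Matrix (Fin d) (Fin d) ℂ)
    (h₁ : Φ X₁ = lam₁ • X₁) (h₂ : Φ X₂ = lam₂ • X₂) :
    Φ (X₁ * X₂) = (lam₁ * lam₂) • (X₁ * X₂) := by
  have k₁ := key U hU p hp hpsum lam₁ hlam₁ X₁ (by rw [← hΦ]; exact h₁)
  have k₂ := key U hU p hp hpsum lam₂ hlam₂ X₂ (by rw [← hΦ]; exact h₂)
  have hUU : ∀ i, (U i)ᴴ * U i = 1 := fun i => by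
    simpa [Matrix.star_eq_conjTranspose] using (Matrix.mem_unitaryGroup_iff'.mp (hU i))
  rw [hΦ]
  have step : ∀ i, U i * (X₁ * X₂) * (U i)ᴴ = (lam₁ * lam₂) • (X₁ * X₂) := by
    intro i
    have : U i * (X₁ * X₂) * (U i)ᴴ
        = (U i * X₁ * (U i)ᴴ) * (U i * X₂ * (U i)ᴴ) := by
      rw [Matrix.mul_assoc (U i * X₁) ((U i)ᴴ), ← Matrix.mul_assoc ((U i)ᴴ) (U i * X₂) ((U i)ᴴ), ← Matrix.mul_assoc ((U i)ᴴ) (U i) X₂, hUU i, Matrix.one_mul]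
      noncomm_ring
    rw [this, k₁ i, k₂ i, Matrix.smul_mul, Matrix.mul_smul, smul_smul]
  simp_rw [step, ← Finset.sum_smul, smul_smul]
  have hps : (∑ i, (p i : ℂ)) = 1 := by
    rw [← Complex.ofReal_sum, hpsum, Complex.ofReal_one]
  rw [hps, one_mul]
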